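/- If the covariance process a is uniformly elliptic (y'a_t y ≥ u‖y‖² for some u > 0, all y, t) and p ∈ R^n has p_i > 0 for all i and Σ_i p_i = 1, then the excess growth rate satisfies γ*_{p,t} = (1/2)(Σ_i p_i a_{ii,t} − p'a_t p) ≥ (u/2)(1 − max_i p_i) > 0 for all t. -/

import Mathlib

open Matrix

set_option maxHeartbeats 1000000 in
/-- If the covariance process `a` is uniformly elliptic
(`y'a_t y ≥ u‖y‖²` for some `u > 0`) and `p` is a strictly positive probability
vector (on at least two assets), then the excess growth rate satisfies
`γ*_{p,t} = (1/2)(Σᵢ pᵢ a_{ii,t} − p'a_t p) ≥ (u/2)(1 − maxᵢ pᵢ) > 0` for all `t`. -/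
theorem excess_growth_uniform_ellipticity_bound
    (n : ℕ) (hn : 1 < n)
    (a : ℝ → Matrix (Fin n) (Fin n) ℝ)
    (hsymm : ∀ t, (a t).IsSymm)
    (u : ℝ) (hu : 0 < u)
    (hell : ∀ (t : ℝ) (y : Fin n → ℝ), u * ∑ i, (y i) ^ 2 ≤ y ⬝ᵥ (a t).mulVec y)
    (p : Fin n → ℝ) (hp : ∀ i, 0 < p i) (hpsum : ∑ i, p i = 1) :
    ∀ t : ℝ,
      (u / 2) * (1 - ⨆ i, p i)
          ≤ (1/2) * ((∑ i, p i * a t i i) - p ⬝ᵥ (a t).mulVec p)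
        ∧ 0 < (u / 2) * (1 - ⨆ i, p i) := by
  have hne : Nonempty (Fin n) := ⟨⟨0, by omega⟩⟩
  have hnt : Nontrivial (Fin n) := Fin.nontrivial_iff_two_le.mpr hn
  obtain ⟨i0, hi0⟩ := Finite.exists_max p
  have hsup : (⨆ i, p i) = p i0 :=
    le_antisymm (ciSup_le hi0) (le_ciSup (Set.Finite.bddAbove (Set.finite_range p)) i0)
  obtain ⟨j, hj⟩ := exists_ne i0
  have hmaxlt : p i0 < 1 := by
    calc p i0 < ∑ i, p i :=
          Finset.single_lt_sum hj (Finset.mem_univ _) (Finset.mem_univ _)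
            (hp j) (fun k _ _ => (hp k).le)
      _ = 1 := hpsum
  set S : ℝ := ∑ i, (p i) ^ 2 with hS
  have hSle : S ≤ p i0 := by
    calc S = ∑ i, p i * p i := by simp [hS, sq]
      _ ≤ ∑ i, p i * p i0 := Finset.sum_le_sum fun i _ =>
            mul_le_mul_of_nonneg_left (hi0 i) (hp i).le
      _ = (∑ i, p i) * p i0 := by rw [Finset.sum_mul]
      _ = p i0 := by rw [hpsum, one_mul]
  intro t
  have hq : ∀ i k : Fin n, (Pi.single i 1 - p : Fin n → ℝ) k = (if k = i then 1 else 0) - p k := by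
    intro i k
    simp [Pi.single_apply]
  -- expansion of each quadratic form
  have key : ∀ i : Fin n,
      (Pi.single i (1:ℝ) - p) ⬝ᵥ (a t).mulVec (Pi.single i (1:ℝ) - p)
        = (a t) i i - (a t).mulVec p i - (∑ j, (a t) j i * p j) + p ⬝ᵥ (a t).mulVec p := by
    intro i
    simp only [Matrix.mulVec_sub, sub_dotProduct, dotProduct_sub,
      Matrix.mulVec_single_one, Matrix.col_apply, single_dotProduct, mul_one, one_mul]
    have e1 : (p ⬝ᵥ fun j => (a t) j i) = ∑ j, (a t) j i * p j :=
      Finset.sum_congr rfl fun _ _ => mul_comm _ _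
    rw [show (a t).col i = fun j => (a t) j i from rfl, e1]
    ring
  have h1 : (∑ i, p i * (a t).mulVec p i) = p ⬝ᵥ (a t).mulVec p := rfl
  have h2 : (∑ i, p i * ∑ j, (a t) j i * p j) = p ⬝ᵥ (a t).mulVec p := by
    simp only [dotProduct, Matrix.mulVec, Finset.mul_sum]
    rw [Finset.sum_comm]
    exact Finset.sum_congr rfl fun i _ => Finset.sum_congr rfl fun k _ => by ring
  -- identity: Σ p_i q_i'Aq_i = Σ p_i A_ii - p'Ap
  have ident : (∑ i, p i * ((Pi.single i (1:ℝ) - p) ⬝ᵥ (a t).mulVec (Pi.single i (1:ℝ) - p)))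
      = (∑ i, p i * (a t) i i) - p ⬝ᵥ (a t).mulVec p := by
    simp only [key]
    have e : ∀ i ∈ Finset.univ, p i * ((a t) i i - (a t).mulVec p i - (∑ j, (a t) j i * p j)
        + p ⬝ᵥ (a t).mulVec p)
        = p i * (a t) i i - p i * (a t).mulVec p i - p i * (∑ j, (a t) j i * p j)
          + (p ⬝ᵥ (a t).mulVec p) * p i := fun i _ => by ring
    rw [Finset.sum_congr rfl e, Finset.sum_add_distrib, Finset.sum_sub_distrib,
      Finset.sum_sub_distrib, h1, h2, ← Finset.mul_sum, hpsum]
    ring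
  -- squared norm of each q_i
  have norm_eq : ∀ i : Fin n,
      (∑ k, ((Pi.single i 1 - p : Fin n → ℝ) k) ^ 2) = 1 - 2 * p i + S := by
    intro i
    have e : ∀ k ∈ Finset.univ, ((Pi.single i 1 - p : Fin n → ℝ) k) ^ 2
        = (if k = i then (1 - 2 * p k) else 0) + (p k) ^ 2 := by
      intro k _
      rw [hq i k]
      by_cases h : k = i <;> simp [h] <;> ring
    rw [Finset.sum_congr rfl e, Finset.sum_add_distrib, Finset.sum_ite_eq']
    simp [← hS]
  -- main inequality
  have hmain : u * (1 - S) ≤ (∑ i, p i * (a t) i i) - p ⬝ᵥ (a t).mulVec p := by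
    rw [← ident]
    have e1 : ∑ i, p i * (u * (1 - 2 * p i + S)) = u * (1 - S) := by
      have e : ∀ i ∈ Finset.univ, p i * (u * (1 - 2 * p i + S))
          = (u * (1 + S)) * p i - (2 * u) * (p i) ^ 2 := fun i _ => by ring
      rw [Finset.sum_congr rfl e, Finset.sum_sub_distrib, ← Finset.mul_sum,
        ← Finset.mul_sum, hpsum, ← hS]
      ring
    calc u * (1 - S) = ∑ i, p i * (u * (1 - 2 * p i + S)) := e1.symm
      _ = ∑ i, p i * (u * ∑ k, ((Pi.single i 1 - p : Fin n → ℝ) k) ^ 2) :=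
          Finset.sum_congr rfl fun i _ => by rw [norm_eq]
      _ ≤ ∑ i, p i * ((Pi.single i (1:ℝ) - p) ⬝ᵥ (a t).mulVec (Pi.single i (1:ℝ) - p)) :=
          by
            refine Finset.sum_le_sum fun i _ => ?_
            exact mul_le_mul_of_nonneg_left (hell t (Pi.single i 1 - p)) (hp i).le
  rw [hsup]
  constructor
  · have h3 : u * (1 - p i0) ≤ u * (1 - S) :=
      mul_le_mul_of_nonneg_left (by linarith) hu.le
    linarith
  · exact mul_pos (by linarith) (by linarith)
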